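/- A measure space (Ω, 𝒜, μ) is localisable if and only if it is semi-finite and for every consistent family (A')_{A ∈ 𝒜_fin} with A' ∈ 𝒜, A' ⊆ A, there exists Ω₀ ∈ 𝒜 such that A' = Ω₀ ∩ A up to μ-null sets for all A ∈ 𝒜_fin. -/

import Mathlib

open MeasureTheory Set ENNReal symmDiff


lemma iUnion_evenOdd {α : Type*} (f g : ℕ → Set α) :
    (⋃ n, (if Even n then f (n / 2) else g (n / 2))) = (⋃ n, f n) ∪ ⋃ n, g n := by
  ext x; simp only [mem_iUnion, mem_union]
  constructor
  · rintro ⟨n, hn⟩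
    by_cases h : Even n
    · exact Or.inl ⟨n / 2, by simpa [h] using hn⟩
    · exact Or.inr ⟨n / 2, by simpa [h] using hn⟩
  · rintro (⟨n, hn⟩ | ⟨n, hn⟩)
    · refine ⟨2 * n, ?_⟩
      have h1 : Even (2 * n) := even_two_mul n
      have h2 : 2 * n / 2 = n := by omega
      simp [h1, h2, hn]
    · refine ⟨2 * n + 1, ?_⟩
      have h1 : ¬ Even (2 * n + 1) := by simp [Nat.even_add_one, even_two_mul]
      have h2 : (2 * n + 1) / 2 = n := by omega
      simp [h1, h2, hn]


/-- A measure space is semi-finite if every measurable set of infinite measure contains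
a measurable subset of finite positive measure. -/
def SemiFinite {Ω : Type*} [MeasurableSpace Ω] (μ : Measure Ω) : Prop :=
  ∀ B : Set Ω, MeasurableSet B → μ B = ∞ →
    ∃ A : Set Ω, MeasurableSet A ∧ A ⊆ B ∧ 0 < μ A ∧ μ A < ∞

/-- A measure space is localisable if it is semi-finite and every family of measurable
sets has an essential supremum. -/
def Localisable {Ω : Type*} [MeasurableSpace Ω] (μ : Measure Ω) : Prop :=
  SemiFinite μ ∧
  ∀ E : Set (Set Ω), (∀ B ∈ E, MeasurableSet B) →
    ∃ S : Set Ω, MeasurableSet S ∧ (∀ B ∈ E, μ (B \ S) = 0) ∧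
      ∀ C : Set Ω, MeasurableSet C → (∀ B ∈ E, μ (B \ C) = 0) → μ (S \ C) = 0

/-- A measure space is localisable iff it is semi-finite and every consistent family
`(A')_{A ∈ 𝒜_fin}` of measurable subsets `A' ⊆ A` (consistent: `A' ∩ B = B' ∩ A` up to
null sets) is of the form `A' = Ω₀ ∩ A` up to null sets for a single measurable `Ω₀`. -/
theorem localisable_iff_consistent_families {Ω : Type*} [MeasurableSpace Ω] (μ : Measure Ω) :
    Localisable μ ↔
      SemiFinite μ ∧
      ∀ F : Set Ω → Set Ω,
        (∀ A : Set Ω, MeasurableSet A → μ A < ∞ → MeasurableSet (F A) ∧ F A ⊆ A) →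
        (∀ A B : Set Ω, MeasurableSet A → μ A < ∞ → MeasurableSet B → μ B < ∞ →
          μ ((F A ∩ B) ∆ (F B ∩ A)) = 0) →
        ∃ Ω₀ : Set Ω, MeasurableSet Ω₀ ∧
          ∀ A : Set Ω, MeasurableSet A → μ A < ∞ → μ (F A ∆ (Ω₀ ∩ A)) = 0 := by
  constructor
  · rintro ⟨hsf, hess⟩
    refine ⟨hsf, ?_⟩
    intro F hF hcons
    obtain ⟨S, hSm, hS1, hS2⟩ := hess {B | ∃ A, MeasurableSet A ∧ μ A < ∞ ∧ B = F A}
      (by rintro B ⟨A, hA, hAfin, rfl⟩; exact (hF A hA hAfin).1)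
    refine ⟨S, hSm, fun A hA hAfin => ?_⟩
    have h1 : μ (F A \ (S ∩ A)) = 0 := by
      refine measure_mono_null (fun x hx => ?_) (hS1 (F A) ⟨A, hA, hAfin, rfl⟩)
      exact ⟨hx.1, fun h => hx.2 ⟨h, (hF A hA hAfin).2 hx.1⟩⟩
    have h2 : μ ((S ∩ A) \ F A) = 0 := by
      have hC : MeasurableSet (Aᶜ ∪ F A) := hA.compl.union (hF A hA hAfin).1
      have hall : ∀ B ∈ {B | ∃ A, MeasurableSet A ∧ μ A < ∞ ∧ B = F A},
          μ (B \ (Aᶜ ∪ F A)) = 0 := by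
        rintro B ⟨B', hB', hB'fin, rfl⟩
        refine measure_mono_null (fun x hx => ?_) (hcons B' A hB' hB'fin hA hAfin)
        simp only [mem_diff, mem_union, mem_compl_iff, not_or, not_not] at hx
        obtain ⟨hx1, hx2, hx3⟩ := hx
        exact Or.inl ⟨⟨hx1, hx2⟩, fun h => hx3 h.1⟩
      refine measure_mono_null (fun x hx => ?_) (hS2 _ hC hall)
      exact ⟨hx.1.1, fun h => h.elim (fun h' => h' hx.1.2) hx.2⟩
    rw [Set.symmDiff_def]
    exact measure_union_null h1 h2
  · rintro ⟨hsf, hfam⟩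
    refine ⟨hsf, ?_⟩
    intro E hE
    classical
    set P : (ℕ → Set Ω) → Prop := fun f => ∀ n, f n ∈ E ∨ f n = ∅ with hPdef
    -- choose a maximizing countable union for each finite-measure A
    have key : ∀ A : Set Ω, MeasurableSet A → μ A < ∞ →
        ∃ f : ℕ → Set Ω, P f ∧ ∀ g : ℕ → Set Ω, P g →
          μ (A ∩ ⋃ n, g n) ≤ μ (A ∩ ⋃ n, f n) := by
      intro A hA hAfin
      set Sv : Set ℝ≥0∞ := {x | ∃ f : ℕ → Set Ω, P f ∧ x = μ (A ∩ ⋃ n, f n)} with hSv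
      have hne : Sv.Nonempty := ⟨μ (A ∩ ⋃ _ : ℕ, (∅ : Set Ω)), fun _ => ∅,
        fun n => Or.inr rfl, rfl⟩
      have hbdd : BddAbove Sv := OrderTop.bddAbove Sv
      obtain ⟨u, -, hu2, hu3⟩ := exists_seq_tendsto_sSup hne hbdd
      choose fk hfk1 hfk2 using hu3
      refine ⟨fun n => fk (Nat.unpair n).1 (Nat.unpair n).2, fun n => hfk1 _ _, ?_⟩
      intro g hg
      have hle : μ (A ∩ ⋃ n, g n) ≤ sSup Sv := le_csSup hbdd ⟨g, hg, rfl⟩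
      refine hle.trans (le_of_tendsto' hu2 fun k => ?_)
      rw [hfk2 k]
      refine measure_mono (inter_subset_inter_right _ ?_)
      intro x hx
      simp only [mem_iUnion] at hx ⊢
      obtain ⟨m, hm⟩ := hx
      exact ⟨Nat.pair k m, by simpa [Nat.unpair_pair] using hm⟩
    choose! f hf1 hf2 using key
    set F : Set Ω → Set Ω := fun A => A ∩ ⋃ n, f A n with hFdef
    have hUm : ∀ A : Set Ω, MeasurableSet A → μ A < ∞ → MeasurableSet (⋃ n, f A n) := by
      intro A hA hAfin
      exact MeasurableSet.iUnion fun n => by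
        rcases hf1 A hA hAfin n with h | h
        · exact hE _ h
        · rw [h]; exact MeasurableSet.empty
    -- key nullity: extra countable unions add nothing
    have hnull : ∀ A : Set Ω, MeasurableSet A → μ A < ∞ → ∀ g : ℕ → Set Ω, P g →
        μ ((A ∩ ⋃ n, g n) \ ⋃ n, f A n) = 0 := by
      intro A hA hAfin g hg
      set g' : ℕ → Set Ω := fun n => if Even n then f A (n / 2) else g (n / 2) with hg'def
      have hPg' : P g' := by
        intro n
        by_cases h : Even n <;> simp only [hg'def, h, if_true, if_false]
        · exact hf1 A hA hAfin _
        · exact hg _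
      have hU : (⋃ n, g' n) = (⋃ n, f A n) ∪ ⋃ n, g n := iUnion_evenOdd _ _
      have hle := hf2 A hA hAfin g' hPg'
      rw [hU] at hle
      have hdisj : Disjoint (A ∩ ⋃ n, f A n) ((A ∩ ⋃ n, g n) \ ⋃ n, f A n) :=
        Disjoint.mono_left inter_subset_right disjoint_sdiff_right
      have hmeas : MeasurableSet (A ∩ ⋃ n, f A n) := hA.inter (hUm A hA hAfin)
      have hun : (A ∩ ⋃ n, f A n) ∪ ((A ∩ ⋃ n, g n) \ ⋃ n, f A n) =
          A ∩ ((⋃ n, f A n) ∪ ⋃ n, g n) := by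
        ext x
        simp only [mem_union, mem_inter_iff, mem_diff]
        tauto
      have := measure_union' hdisj hmeas (μ := μ)
      rw [hun] at this
      have hle2 : μ (A ∩ ⋃ n, f A n) + μ ((A ∩ ⋃ n, g n) \ ⋃ n, f A n) ≤
          μ (A ∩ ⋃ n, f A n) + 0 := by
        rw [← this, add_zero]; exact hle
      have hfin : μ (A ∩ ⋃ n, f A n) ≠ ∞ :=
        (lt_of_le_of_lt (measure_mono inter_subset_left) hAfin).ne
      exact le_antisymm ((ENNReal.add_le_add_iff_left hfin).mp hle2) zero_le
    -- F satisfies the hypotheses of hfam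
    have hFmem : ∀ A : Set Ω, MeasurableSet A → μ A < ∞ → MeasurableSet (F A) ∧ F A ⊆ A :=
      fun A hA hAfin => ⟨hA.inter (hUm A hA hAfin), inter_subset_left⟩
    have hFcons : ∀ A B : Set Ω, MeasurableSet A → μ A < ∞ → MeasurableSet B → μ B < ∞ →
        μ ((F A ∩ B) ∆ (F B ∩ A)) = 0 := by
      intro A B hA hAfin hB hBfin
      rw [Set.symmDiff_def]
      refine measure_union_null ?_ ?_
      · refine measure_mono_null (fun x hx => ?_) (hnull B hB hBfin (f A) (hf1 A hA hAfin))
        simp only [hFdef, mem_diff, mem_inter_iff] at hx ⊢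
        obtain ⟨⟨⟨hxA, hxfA⟩, hxB⟩, hx2⟩ := hx
        exact ⟨⟨hxB, hxfA⟩, fun h => hx2 ⟨⟨hxB, h⟩, hxA⟩⟩
      · refine measure_mono_null (fun x hx => ?_) (hnull A hA hAfin (f B) (hf1 B hB hBfin))
        simp only [hFdef, mem_diff, mem_inter_iff] at hx ⊢
        obtain ⟨⟨⟨hxB, hxfB⟩, hxA⟩, hx2⟩ := hx
        exact ⟨⟨hxA, hxfB⟩, fun h => hx2 ⟨⟨hxA, h⟩, hxB⟩⟩
    obtain ⟨Ω₀, hΩ₀m, hΩ₀⟩ := hfam F hFmem hFcons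
    refine ⟨Ω₀, hΩ₀m, ?_, ?_⟩
    · -- every B ∈ E is essentially below Ω₀
      intro B hB
      by_contra hpos
      have hBm := hE B hB
      have : ∃ A : Set Ω, MeasurableSet A ∧ A ⊆ B \ Ω₀ ∧ 0 < μ A ∧ μ A < ∞ := by
        rcases eq_or_ne (μ (B \ Ω₀)) ∞ with h | h
        · exact hsf _ (hBm.diff hΩ₀m) h
        · exact ⟨B \ Ω₀, hBm.diff hΩ₀m, subset_rfl, pos_iff_ne_zero.mpr hpos, h.lt_top⟩
      obtain ⟨A, hA, hAsub, hApos, hAfin⟩ := this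
      have hg : P (fun _ : ℕ => B) := fun _ => Or.inl hB
      have h1 : μ A ≤ μ (F A) := by
        have := hf2 A hA hAfin (fun _ => B) hg
        have hAB : A ∩ (⋃ _ : ℕ, B) = A := by
          simp only [iUnion_const]
          exact inter_eq_left.mpr fun x hx => (hAsub hx).1
        rw [hAB] at this
        exact this
      have h2 : μ (Ω₀ ∩ A) = 0 := by
        have : Ω₀ ∩ A = ∅ := by
          ext x; simp only [mem_inter_iff, mem_empty_iff_false, iff_false, not_and]
          exact fun hx hxA => (hAsub hxA).2 hx
        rw [this, measure_empty]
      have h3 : μ (F A) ≤ μ (F A ∆ (Ω₀ ∩ A)) + μ (Ω₀ ∩ A) := by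
        refine (measure_mono ?_).trans (measure_union_le _ _)
        intro x hx
        by_cases h : x ∈ Ω₀ ∩ A
        · exact Or.inr h
        · exact Or.inl (Or.inl ⟨hx, h⟩)
      rw [hΩ₀ A hA hAfin, h2, add_zero] at h3
      exact absurd (le_antisymm (h1.trans h3) zero_le) hApos.ne'
    · -- minimality
      intro C hC hCall
      by_contra hpos
      have : ∃ A : Set Ω, MeasurableSet A ∧ A ⊆ Ω₀ \ C ∧ 0 < μ A ∧ μ A < ∞ := by
        rcases eq_or_ne (μ (Ω₀ \ C)) ∞ with h | h
        · exact hsf _ (hΩ₀m.diff hC) h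
        · exact ⟨Ω₀ \ C, hΩ₀m.diff hC, subset_rfl, pos_iff_ne_zero.mpr hpos, h.lt_top⟩
      obtain ⟨A, hA, hAsub, hApos, hAfin⟩ := this
      have h1 : μ (A \ F A) = 0 := by
        refine measure_mono_null (fun x hx => ?_) (hΩ₀ A hA hAfin)
        exact Or.inr ⟨⟨(hAsub hx.1).1, hx.1⟩, hx.2⟩
      have h2 : μ (F A) = 0 := by
        have hsub : F A ⊆ (⋃ n, f A n) \ C := by
          intro x hx
          exact ⟨hx.2, fun h => (hAsub hx.1).2 h⟩
        refine measure_mono_null hsub ?_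
        have : (⋃ n, f A n) \ C ⊆ ⋃ n, (f A n \ C) := by
          intro x hx
          obtain ⟨n, hn⟩ := mem_iUnion.mp hx.1
          exact mem_iUnion.mpr ⟨n, hn, hx.2⟩
        refine measure_mono_null this (measure_iUnion_null fun n => ?_)
        rcases hf1 A hA hAfin n with h | h
        · exact hCall _ h
        · rw [h]; simp
      have : μ A ≤ μ (A \ F A) + μ (F A) := by
        refine (measure_mono ?_).trans (measure_union_le _ _)
        intro x hx
        by_cases h : x ∈ F A
        · exact Or.inr h
        · exact Or.inl ⟨hx, h⟩
      rw [h1, h2, add_zero] at this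
      exact absurd (le_antisymm this zero_le) hApos.ne'
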